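/- If M_J : S^n → X^n is (ε_J, δ)-jointly differentially private and M_D : X^n → O is ε_D-differentially private, then the composition M(s) = M_D(M_J(s)) is (2ε_D + ε_J, δ)-differentially private. -/

import Mathlib

open ENNReal

/-- Change of variables for weighted sums over a `PMF`. -/
lemma pmf_tsum_map_mul {α β : Type*} (r : PMF α) (π : α → β) (F : β → ℝ≥0∞) :
    ∑' y, (r.map π) y * F y = ∑' x, r x * F (π x) := by
  classical
  simp only [PMF.map_apply]
  calc ∑' y, (∑' x, if y = π x then r x else 0) * F y
      = ∑' y, ∑' x, (if y = π x then r x else 0) * F y :=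
        tsum_congr fun y => ENNReal.tsum_mul_right.symm
    _ = ∑' x, ∑' y, (if y = π x then r x else 0) * F y := ENNReal.tsum_comm
    _ = ∑' x, ∑' y, (if y = π x then r x * F (π x) else 0) := by
        refine tsum_congr fun x => tsum_congr fun y => ?_
        split_ifs with h
        · rw [h]
        · simp
    _ = ∑' x, r x * F (π x) := tsum_congr fun x => tsum_ite_eq (π x) _

/-- Key splitting lemma: an `(c, d)`-style bound on all cylinder sets gives the same
bound for expectations of `[0,1]`-valued functions of the projection. -/
lemma key_split {α β : Type*} (p q : PMF α) (π : α → β) (c d : ℝ≥0∞) (hc : c ≠ ⊤)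
    (hpq : ∀ B : Set β, p.toOuterMeasure (π ⁻¹' B) ≤ c * q.toOuterMeasure (π ⁻¹' B) + d)
    (G : β → ℝ≥0∞) (hG : ∀ y, G y ≤ 1) :
    ∑' x, p x * G (π x) ≤ c * ∑' x, q x * G (π x) + d := by
  set P : β → ℝ≥0∞ := fun y => (p.map π) y with hP
  set Q : β → ℝ≥0∞ := fun y => (q.map π) y with hQ
  have mes : ∀ (r : PMF α) (A : Set β),
      r.toOuterMeasure (π ⁻¹' A) = ∑' y, A.indicator (⇑(r.map π)) y := by
    intro r A
    rw [← PMF.toOuterMeasure_map_apply, PMF.toOuterMeasure_apply]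
  rw [← pmf_tsum_map_mul p π G, ← pmf_tsum_map_mul q π G]
  set A : Set β := {y | c * Q y < P y} with hA
  -- split the sum over A and Aᶜ
  have hsplit : ∀ f : β → ℝ≥0∞,
      ∑' y, f y = ∑' y, A.indicator f y + ∑' y, Aᶜ.indicator f y := by
    intro f
    rw [← ENNReal.tsum_add]
    exact tsum_congr fun y => (congrFun (Set.indicator_self_add_compl A f) y).symm
  -- bound on Aᶜ
  have hAc : ∑' y, Aᶜ.indicator (fun y => P y * G y) y
      ≤ c * ∑' y, Aᶜ.indicator (fun y => Q y * G y) y := by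
    rw [← ENNReal.tsum_mul_left]
    refine Summable.tsum_le_tsum (fun y => ?_) ENNReal.summable ENNReal.summable
    by_cases hy : y ∈ Aᶜ
    · rw [Set.indicator_of_mem hy, Set.indicator_of_mem hy]
      have : P y ≤ c * Q y := not_lt.mp hy
      calc P y * G y ≤ (c * Q y) * G y := mul_le_mul_left this _
        _ = c * (Q y * G y) := by ring
    · simp [Set.indicator_of_notMem hy]
  -- the excess on A is at most d
  have hQfin : ∑' y, A.indicator (fun y => c * Q y) y ≠ ⊤ := by
    have h1 : ∑' y, A.indicator (fun y => c * Q y) y ≤ c * ∑' y, Q y := by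
      rw [← ENNReal.tsum_mul_left]
      exact Summable.tsum_le_tsum (fun y => Set.indicator_le_self _ _ y)
        ENNReal.summable ENNReal.summable
    have h2 : ∑' y, Q y = 1 := (q.map π).tsum_coe
    rw [h2, mul_one] at h1
    exact fun h => hc (top_le_iff.mp (h ▸ h1))
  have hsum : ∑' y, A.indicator (fun y => P y - c * Q y) y
      + ∑' y, A.indicator (fun y => c * Q y) y = ∑' y, A.indicator P y := by
    rw [← ENNReal.tsum_add]
    refine tsum_congr fun y => ?_
    by_cases hy : y ∈ A
    · rw [Set.indicator_of_mem hy, Set.indicator_of_mem hy, Set.indicator_of_mem hy]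
      exact tsub_add_cancel_of_le (le_of_lt hy)
    · simp [Set.indicator_of_notMem hy]
  have hCQ : ∑' y, A.indicator (fun y => c * Q y) y = c * ∑' y, A.indicator Q y := by
    rw [← ENNReal.tsum_mul_left]
    refine tsum_congr fun y => ?_
    by_cases hy : y ∈ A <;>
      simp [Set.indicator_of_mem, Set.indicator_of_notMem, hy]
  have hPA : ∑' y, A.indicator P y ≤ ∑' y, A.indicator (fun y => c * Q y) y + d := by
    have := hpq A
    rw [mes p A, mes q A] at this
    rw [hCQ]
    exact this
  have hexcess : ∑' y, A.indicator (fun y => P y - c * Q y) y ≤ d := by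
    have h3 : ∑' y, A.indicator (fun y => P y - c * Q y) y
        + ∑' y, A.indicator (fun y => c * Q y) y
        ≤ d + ∑' y, A.indicator (fun y => c * Q y) y := by
      rw [hsum, add_comm d]
      exact hPA
    exact (ENNReal.add_le_add_iff_right hQfin).mp h3
  -- bound on A
  have hAb : ∑' y, A.indicator (fun y => P y * G y) y
      ≤ c * ∑' y, A.indicator (fun y => Q y * G y) y + d := by
    have h4 : ∀ y, A.indicator (fun y => P y * G y) y
        ≤ c * A.indicator (fun y => Q y * G y) y
          + A.indicator (fun y => P y - c * Q y) y := by
      intro y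
      by_cases hy : y ∈ A
      · rw [Set.indicator_of_mem hy, Set.indicator_of_mem hy, Set.indicator_of_mem hy]
        have hle : c * Q y ≤ P y := le_of_lt hy
        calc P y * G y = (c * Q y + (P y - c * Q y)) * G y := by
              rw [add_tsub_cancel_of_le hle]
          _ = c * (Q y * G y) + (P y - c * Q y) * G y := by ring
          _ ≤ c * (Q y * G y) + (P y - c * Q y) * 1 :=
              add_le_add_right (mul_le_mul_right (hG y) _) _
          _ = c * (Q y * G y) + (P y - c * Q y) := by rw [mul_one]
      · simp [Set.indicator_of_notMem hy]
    calc ∑' y, A.indicator (fun y => P y * G y) y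
        ≤ ∑' y, (c * A.indicator (fun y => Q y * G y) y
            + A.indicator (fun y => P y - c * Q y) y) :=
          Summable.tsum_le_tsum h4 ENNReal.summable ENNReal.summable
      _ = c * ∑' y, A.indicator (fun y => Q y * G y) y
            + ∑' y, A.indicator (fun y => P y - c * Q y) y := by
          rw [ENNReal.tsum_add, ENNReal.tsum_mul_left]
      _ ≤ c * ∑' y, A.indicator (fun y => Q y * G y) y + d :=
          add_le_add_right hexcess _
  calc ∑' y, P y * G y
      = ∑' y, A.indicator (fun y => P y * G y) y
        + ∑' y, Aᶜ.indicator (fun y => P y * G y) y := hsplit _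
    _ ≤ (c * ∑' y, A.indicator (fun y => Q y * G y) y + d)
        + c * ∑' y, Aᶜ.indicator (fun y => Q y * G y) y :=
        add_le_add hAb hAc
    _ = c * (∑' y, A.indicator (fun y => Q y * G y) y
        + ∑' y, Aᶜ.indicator (fun y => Q y * G y) y) + d := by ring
    _ = c * ∑' y, Q y * G y + d := by rw [← hsplit]

/-- `(ε,δ)`-differential privacy for a randomized mechanism `M : Sⁿ → PMF O`. -/
def DiffPrivate {S O : Type*} {n : ℕ} (M : (Fin n → S) → PMF O) (ε δ : ℝ) : Prop :=
  ∀ (i : Fin n) (s : Fin n → S) (si' : S) (B : Set O),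
    (M s).toOuterMeasure B ≤
      ENNReal.ofReal (Real.exp ε) * (M (Function.update s i si')).toOuterMeasure B
        + ENNReal.ofReal δ

/-- `(ε,δ)`-joint differential privacy: for every player `i`, the joint output to the
players other than `i` is differentially private in `i`'s input. -/
def JointDiffPrivate {S X : Type*} {n : ℕ}
    (M : (Fin n → S) → PMF (Fin n → X)) (ε δ : ℝ) : Prop :=
  ∀ (i : Fin n) (s : Fin n → S) (si' : S)
    (B : Set ({j : Fin n // j ≠ i} → X)),
    (M s).toOuterMeasure {x | (fun j : {j : Fin n // j ≠ i} => x j.1) ∈ B} ≤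
      ENNReal.ofReal (Real.exp ε) *
        (M (Function.update s i si')).toOuterMeasure
          {x | (fun j : {j : Fin n // j ≠ i} => x j.1) ∈ B}
        + ENNReal.ofReal δ

/-- Composing an `(ε_J, δ)`-jointly differentially private algorithm with an
`ε_D`-differentially private algorithm yields a `(2ε_D + ε_J, δ)`-differentially
private algorithm. -/
theorem dp_of_dp_comp_jdp {S X O : Type*} {n : ℕ}
    (MJ : (Fin n → S) → PMF (Fin n → X)) (MD : (Fin n → X) → PMF O)
    (εJ εD δ : ℝ) (hεJ : 0 ≤ εJ) (hεD : 0 ≤ εD) (hδ : 0 ≤ δ)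
    (hJ : JointDiffPrivate MJ εJ δ) (hD : DiffPrivate MD εD 0) :
    DiffPrivate (fun s => (MJ s).bind MD) (2 * εD + εJ) δ := by
  intro i s si' B
  set s' : Fin n → S := Function.update s i si' with hs'
  set π : (Fin n → X) → ({j : Fin n // j ≠ i} → X) := fun x j => x j.1 with hπ
  set h : (Fin n → X) → ℝ≥0∞ := fun x => (MD x).toOuterMeasure B with hh
  set ext : ({j : Fin n // j ≠ i} → X) → X → (Fin n → X) :=
    fun y xi j => if hj : j = i then xi else y ⟨j, hj⟩ with hext
  set V : ({j : Fin n // j ≠ i} → X) → ℝ≥0∞ :=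
    fun y => min 1 (⨅ xi : X, ENNReal.ofReal (Real.exp εD) * h (ext y xi)) with hV
  have hext_update : ∀ (x : Fin n → X) (xi : X),
      ext (π x) xi = Function.update x i xi := by
    intro x xi
    funext j
    by_cases hj : j = i <;> simp [hext, hπ, Function.update, hj]
  have hext_self : ∀ x : Fin n → X, ext (π x) (x i) = x := by
    intro x
    rw [hext_update]
    exact Function.update_eq_self i x
  have h_le_one : ∀ x, h x ≤ 1 := by
    intro x
    rw [hh]
    simp only [PMF.toOuterMeasure_apply]
    calc ∑' o, B.indicator (⇑(MD x)) o ≤ ∑' o, (MD x) o :=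
          Summable.tsum_le_tsum (fun o => Set.indicator_le_self _ _ o)
            ENNReal.summable ENNReal.summable
      _ = 1 := (MD x).tsum_coe
  have ha : ∀ x, h x ≤ V (π x) := by
    intro x
    refine le_min (h_le_one x) (le_iInf fun xi => ?_)
    have := hD i x xi B
    rw [ENNReal.ofReal_zero, add_zero] at this
    rw [hext_update]
    exact this
  have hcc : ∀ x, V (π x) ≤ ENNReal.ofReal (Real.exp εD) * h x := by
    intro x
    refine (min_le_right _ _).trans ?_
    have := iInf_le (fun xi => ENNReal.ofReal (Real.exp εD) * h (ext (π x) xi)) (x i)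
    rwa [hext_self] at this
  have hpq : ∀ B' : Set ({j : Fin n // j ≠ i} → X),
      (MJ s).toOuterMeasure (π ⁻¹' B') ≤
        ENNReal.ofReal (Real.exp εJ) * (MJ s').toOuterMeasure (π ⁻¹' B')
          + ENNReal.ofReal δ := by
    intro B'
    exact hJ i s si' B'
  simp only [PMF.toOuterMeasure_bind_apply]
  calc ∑' x, (MJ s) x * h x
      ≤ ∑' x, (MJ s) x * V (π x) :=
        Summable.tsum_le_tsum (fun x => mul_le_mul_right (ha x) _)
          ENNReal.summable ENNReal.summable
    _ ≤ ENNReal.ofReal (Real.exp εJ) * ∑' x, (MJ s') x * V (π x)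
          + ENNReal.ofReal δ :=
        key_split (MJ s) (MJ s') π _ _ ENNReal.ofReal_ne_top hpq V
          (fun y => min_le_left _ _)
    _ ≤ ENNReal.ofReal (Real.exp εJ)
          * (ENNReal.ofReal (Real.exp εD) * ∑' x, (MJ s') x * h x)
          + ENNReal.ofReal δ := by
        refine add_le_add_left (mul_le_mul_right ?_ _) _
        rw [← ENNReal.tsum_mul_left]
        refine Summable.tsum_le_tsum (fun x => ?_) ENNReal.summable ENNReal.summable
        calc (MJ s') x * V (π x)
            ≤ (MJ s') x * (ENNReal.ofReal (Real.exp εD) * h x) :=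
              mul_le_mul_right (hcc x) _
          _ = ENNReal.ofReal (Real.exp εD) * ((MJ s') x * h x) := by ring
    _ ≤ ENNReal.ofReal (Real.exp (2 * εD + εJ)) * ∑' x, (MJ s') x * h x
          + ENNReal.ofReal δ := by
        rw [← mul_assoc, ← ENNReal.ofReal_mul (Real.exp_nonneg εJ), ← Real.exp_add]
        refine add_le_add_left (mul_le_mul_left ?_ _) _
        exact ENNReal.ofReal_le_ofReal (Real.exp_le_exp.mpr (by linarith))
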